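/- Let n < m and 1 ≤ r ≤ n, 1 ≤ s ≤ m, 1 ≤ r' ≤ m, 1 ≤ s' ≤ n. Then there is no graded ring isomorphism between ℤ[x₁,x₂]/⟨x₁^(n+1−r)(x₁+x₂)^r, x₂^(m+1−s)(2x₁+x₂)^s⟩ and ℤ[y₁,y₂]/⟨y₁^(n+1−s')(y₁+2y₂)^(s'), y₂^(m+1−r')(y₁+y₂)^(r')⟩. -/

import Mathlib

open MvPolynomial

-- ===== auxiliary lemmas =====

private lemma hc_mul_lt {σ R : Type*} [CommRing R] {Q : MvPolynomial σ R} {e : ℕ}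
    (hQ : Q.IsHomogeneous e) (u : MvPolynomial σ R) {d : ℕ} (hde : d < e) :
    homogeneousComponent d (u * Q) = 0 := by
  conv_lhs => rw [← sum_homogeneousComponent u, Finset.sum_mul, map_sum]
  refine Finset.sum_eq_zero fun i _ => ?_
  have h1 : ((homogeneousComponent i u) * Q).IsHomogeneous (i + e) :=
    (homogeneousComponent_isHomogeneous i u).mul hQ
  rw [homogeneousComponent_of_mem h1, if_neg (by omega)]

private lemma hc_mul_eq {σ R : Type*} [CommRing R] {Q : MvPolynomial σ R} {e : ℕ}
    (hQ : Q.IsHomogeneous e) (u : MvPolynomial σ R) :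
    ∃ c : R, homogeneousComponent e (u * Q) = C c * Q := by
  refine ⟨coeff 0 u, ?_⟩
  conv_lhs => rw [← sum_homogeneousComponent u, Finset.sum_mul, map_sum]
  rw [Finset.sum_eq_single 0]
  · have h1 : ((homogeneousComponent 0 u) * Q).IsHomogeneous (0 + e) :=
      (homogeneousComponent_isHomogeneous 0 u).mul hQ
    rw [homogeneousComponent_of_mem h1, if_pos (by omega), homogeneousComponent_zero]
  · intro i _ hi
    have h1 : ((homogeneousComponent i u) * Q).IsHomogeneous (i + e) :=
      (homogeneousComponent_isHomogeneous i u).mul hQ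
    rw [homogeneousComponent_of_mem h1, if_neg (by omega)]
  · intro h; exact absurd (Finset.mem_range.mpr (by omega)) h

private lemma deg_one_cases' (d : Fin 2 →₀ ℕ) (hd : d.degree = 1) :
    d = Finsupp.single 0 1 ∨ d = Finsupp.single 1 1 := by
  have hsum : d 0 + d 1 = 1 := by
    have h : d.degree = ∑ i : Fin 2, d i :=
      Finset.sum_subset (Finset.subset_univ _)
        (fun i _ hi => Finsupp.notMem_support_iff.mp hi)
    rw [h, Fin.sum_univ_two] at hd; exact hd
  rcases Nat.eq_zero_or_pos (d 0) with h0 | h0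
  · right
    ext i
    fin_cases i <;> simp [Finsupp.single_apply] <;> omega
  · left
    ext i
    fin_cases i <;> simp [Finsupp.single_apply] <;> omega

private lemma homog_one_struct {R : Type*} [CommRing R] (f : MvPolynomial (Fin 2) R)
    (hf : f.IsHomogeneous 1) :
    f = C (coeff (Finsupp.single 0 1) f) * X 0 + C (coeff (Finsupp.single 1 1) f) * X 1 := by
  ext d
  rw [coeff_add, coeff_C_mul, coeff_C_mul, coeff_X', coeff_X']
  by_cases h0 : d = Finsupp.single 0 1
  · subst h0
    rw [if_pos rfl, if_neg (by simp [Finsupp.single_eq_single_iff])]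
    ring
  · by_cases h1 : d = Finsupp.single 1 1
    · subst h1
      rw [if_pos rfl, if_neg (by simp [Finsupp.single_eq_single_iff])]
      ring
    · rw [if_neg (fun h => h0 h.symm), if_neg (fun h => h1 h.symm)]
      have : coeff d f = 0 := by
        apply hf.coeff_eq_zero
        intro hdeg
        rcases deg_one_cases' d hdeg with h | h
        · exact h0 h
        · exact h1 h
      rw [this]; ring

private lemma homog_map {f : ℤ →+* ZMod 2} {φ : MvPolynomial (Fin 2) ℤ} {n : ℕ}
    (h : φ.IsHomogeneous n) : (MvPolynomial.map f φ).IsHomogeneous n := by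
  intro d hd
  apply h
  intro h0
  simp [coeff_map, h0] at hd

private abbrev P2 := MvPolynomial (Fin 2) (ZMod 2)

private lemma core (IC : ℤ →+* P2) (h : Fin 2 → P2) (E : Fin 2 → P2) (e : Fin 2 → ZMod 2)
    (hE : ∀ i, aeval E (h i) = C (e i)) (q : MvPolynomial (Fin 2) ℤ) (j : Fin 2)
    (hq : eval₂ IC h q = X j) : ∃ k : ZMod 2, E j = C k := by
  have h1 := congrArg (aeval (R := ZMod 2) E) hq
  rw [aeval_X] at h1
  have h3 : (aeval (R := ZMod 2) E) (eval₂ IC h q) =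
      eval₂ (((aeval (R := ZMod 2) E : P2 →ₐ[ZMod 2] P2) : P2 →+* P2).comp IC)
        (fun i => aeval (R := ZMod 2) E (h i)) q :=
    eval₂_comp_left _ _ _ _
  rw [h3] at h1
  refine ⟨eval₂ (Int.castRingHom (ZMod 2)) e q, ?_⟩
  rw [← h1]
  have h2 : (C : ZMod 2 →+* P2) (eval₂ (Int.castRingHom (ZMod 2)) e q)
      = eval₂ ((C : ZMod 2 →+* P2).comp (Int.castRingHom (ZMod 2))) (fun i => C (e i)) q :=
    eval₂_comp_left _ _ _ _
  rw [show ((C : ZMod 2 →+* P2) (eval₂ (Int.castRingHom (ZMod 2)) e q)) =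
    C (eval₂ (Int.castRingHom (ZMod 2)) e q) from rfl] at h2
  rw [h2]
  congr 1
  · exact RingHom.ext_int _ _
  · funext i; exact hE i

private lemma char2 (x : ZMod 2) : x + x = 0 := by
  rw [← two_mul, show (2 : ZMod 2) = 0 by decide, zero_mul]

private lemma cCmulX1 {α k : ZMod 2} (h : C α * X 1 = (C k : P2)) : α = 0 := by
  have := congrArg (coeff (Finsupp.single (1 : Fin 2) 1)) h
  rw [coeff_C_mul, coeff_X_same, coeff_C,
    if_neg (fun hs => one_ne_zero (Finsupp.single_eq_zero.mp hs.symm))] at this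
  simpa using this

private lemma no_reach (IC : ℤ →+* P2) (h : Fin 2 → P2) (α β : ZMod 2)
    (hh0 : ∃ c : ZMod 2, h 0 = C c * (C α * X 0 + C β * X 1))
    (hh1 : ∃ c : ZMod 2, h 1 = C c * (C α * X 0 + C β * X 1))
    (hq : ∀ j : Fin 2, ∃ q : MvPolynomial (Fin 2) ℤ, eval₂ IC h q = X j) : False := by
  have hh : ∀ i, ∃ c : ZMod 2, h i = C c * (C α * X 0 + C β * X 1) := by
    intro i
    fin_cases i
    · exact hh0
    · exact hh1
  set E : Fin 2 → P2 := ![C β * X 1, C α * X 1] with hEdef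
  have hE : ∀ i, aeval E (h i) = C 0 := by
    intro i
    obtain ⟨c, hc⟩ := hh i
    rw [hc]
    simp only [map_mul, map_add, aeval_X, aeval_C, algebraMap_eq, hEdef,
      Matrix.cons_val_zero, Matrix.cons_val_one, Matrix.head_cons]
    have h2 : (2 : P2) = 0 := by
      rw [show (2 : P2) = C 2 from (map_ofNat C 2).symm, show (2 : ZMod 2) = 0 by decide,
        map_zero]
    rw [map_zero]
    linear_combination (C c * C α * C β * X 1 : P2) * h2
  have hα : α = 0 := by
    obtain ⟨q, hq1⟩ := hq 1
    obtain ⟨k, hk⟩ := core IC h E (fun _ => 0) hE q 1 hq1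
    exact cCmulX1 (by simpa [hEdef] using hk)
  have hβ : β = 0 := by
    obtain ⟨q, hq0⟩ := hq 0
    obtain ⟨k, hk⟩ := core IC h E (fun _ => 0) hE q 0 hq0
    exact cCmulX1 (by simpa [hEdef] using hk)
  have hzero : ∀ i, h i = 0 := by
    intro i; obtain ⟨c, hc⟩ := hh i; rw [hc, hα, hβ]; simp
  have hE2 : ∀ i, aeval (fun j : Fin 2 => (X j : P2)) (h i) = C 0 := by
    intro i; rw [hzero i]; simp
  obtain ⟨q, hq0⟩ := hq 0
  obtain ⟨k, hk⟩ := core IC h _ (fun _ => 0) hE2 q 0 hq0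
  have := congrArg (coeff (Finsupp.single (0 : Fin 2) 1)) hk
  rw [coeff_X_same, coeff_C,
    if_neg (fun hs => one_ne_zero (Finsupp.single_eq_zero.mp hs.symm))] at this
  exact one_ne_zero this

private lemma zmod_pow_one {u w : ZMod 2} {a b : ℕ} (ha : a ≠ 0) (hb : b ≠ 0)
    (h : u ^ a * w ^ b = 1) : u = 1 ∧ w = 1 := by
  have hcase : ∀ x : ZMod 2, x = 0 ∨ x = 1 := by decide
  constructor
  · rcases hcase u with h1 | h1
    · rw [h1, zero_pow ha, zero_mul] at h
      exact absurd h.symm one_ne_zero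
    · exact h1
  · rcases hcase w with h1 | h1
    · rw [h1, zero_pow hb, mul_zero] at h
      exact absurd h.symm one_ne_zero
    · exact h1

private lemma lin_coeffs {A B : ZMod 2} (hz : C A * X 0 + C B * X 1 = (0 : P2)) :
    A = 0 ∧ B = 0 := by
  constructor
  · have := congrArg (coeff (Finsupp.single (0 : Fin 2) 1)) hz
    simpa [coeff_add, coeff_C_mul, coeff_X', Finsupp.single_eq_single_iff] using this
  · have := congrArg (coeff (Finsupp.single (1 : Fin 2) 1)) hz
    simpa [coeff_add, coeff_C_mul, coeff_X', Finsupp.single_eq_single_iff] using this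

-- ===== main statement =====

def IsGradedIso (I J : Ideal (MvPolynomial (Fin 2) ℤ)) : Prop :=
  ∃ g : Fin 2 → MvPolynomial (Fin 2) ℤ,
    (∀ i, (g i).IsHomogeneous 1) ∧
    Function.Bijective ⇑(MvPolynomial.aeval (R := ℤ) g) ∧
    Ideal.map (MvPolynomial.aeval (R := ℤ) g) I = J

theorem stmt10 (n m r s r' s' : ℕ) (hnm : n < m)
    (hr1 : 1 ≤ r) (hrn : r ≤ n) (hs1 : 1 ≤ s) (hsm : s ≤ m)
    (hr'1 : 1 ≤ r') (hr'm : r' ≤ m) (hs'1 : 1 ≤ s') (hs'n : s' ≤ n) :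
    ¬ IsGradedIso
        (Ideal.span {(X 0 : MvPolynomial (Fin 2) ℤ) ^ (n + 1 - r) * (X 0 + X 1) ^ r,
          X 1 ^ (m + 1 - s) * (2 * X 0 + X 1) ^ s})
        (Ideal.span {(X 0 : MvPolynomial (Fin 2) ℤ) ^ (n + 1 - s') * (X 0 + 2 * X 1) ^ s',
          X 1 ^ (m + 1 - r') * (X 0 + X 1) ^ r'}) := by
  rintro ⟨g, hg, ⟨hinj, hsurj⟩, hmap⟩
  -- names
  set P₁ : MvPolynomial (Fin 2) ℤ := X 0 ^ (n + 1 - r) * (X 0 + X 1) ^ r with hP₁def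
  set Q₁ : MvPolynomial (Fin 2) ℤ := X 0 ^ (n + 1 - s') * (X 0 + 2 * X 1) ^ s' with hQ₁def
  set Q₂ : MvPolynomial (Fin 2) ℤ := X 1 ^ (m + 1 - r') * (X 0 + X 1) ^ r' with hQ₂def
  -- membership of the image
  have hPmem : aeval (R := ℤ) g P₁ ∈ Ideal.span {Q₁, Q₂} := by
    rw [← hmap]
    exact Ideal.mem_map_of_mem _ (Ideal.subset_span (Set.mem_insert _ _))
  obtain ⟨u, v, huv⟩ := Ideal.mem_span_pair.mp hPmem
  -- homogeneity facts
  have hX01 : ((X 0 + 2 * X 1 : MvPolynomial (Fin 2) ℤ)).IsHomogeneous 1 := by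
    have h2 : (2 * X 1 : MvPolynomial (Fin 2) ℤ) = C 2 * X 1 := by
      rw [show (2 : MvPolynomial (Fin 2) ℤ) = C 2 from (map_ofNat C 2).symm]
    exact (isHomogeneous_X ℤ 0).add (h2 ▸ (isHomogeneous_X ℤ 1).C_mul 2)
  have hQ1hom : Q₁.IsHomogeneous (n + 1) := by
    have h3 := (isHomogeneous_X_pow (R := ℤ) (0 : Fin 2) (n + 1 - s')).mul (hX01.pow s')
    convert h3 using 1
    omega
  have hQ2hom : Q₂.IsHomogeneous (m + 1) := by
    have h4 : ((X 0 + X 1 : MvPolynomial (Fin 2) ℤ)).IsHomogeneous 1 :=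
      (isHomogeneous_X ℤ 0).add (isHomogeneous_X ℤ 1)
    have h3 := (isHomogeneous_X_pow (R := ℤ) (1 : Fin 2) (m + 1 - r')).mul (h4.pow r')
    convert h3 using 1
    omega
  have hP1hom : P₁.IsHomogeneous (n + 1) := by
    have h4 : ((X 0 + X 1 : MvPolynomial (Fin 2) ℤ)).IsHomogeneous 1 :=
      (isHomogeneous_X ℤ 0).add (isHomogeneous_X ℤ 1)
    have h3 := (isHomogeneous_X_pow (R := ℤ) (0 : Fin 2) (n + 1 - r)).mul (h4.pow r)
    convert h3 using 1
    omega
  have hPghom : (aeval (R := ℤ) g P₁).IsHomogeneous (n + 1) := by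
    have h5 := hP1hom.aeval g hg
    simpa using h5
  -- extract degree-(n+1) component
  obtain ⟨c, hcq⟩ := hc_mul_eq hQ1hom u
  have hkey : C c * Q₁ = aeval (R := ℤ) g P₁ := by
    have h5 := congrArg (homogeneousComponent (n + 1)) huv
    rw [map_add, hcq, hc_mul_lt hQ2hom v (by omega), add_zero,
      homogeneousComponent_of_mem hPghom, if_pos rfl] at h5
    exact h5
  have haev : aeval (R := ℤ) g P₁ = (g 0) ^ (n + 1 - r) * (g 0 + g 1) ^ r := by
    rw [hP₁def, map_mul, map_pow, map_pow, map_add, aeval_X, aeval_X]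
  -- reduce mod 2
  set red : MvPolynomial (Fin 2) ℤ →+* P2 :=
    (MvPolynomial.map (Int.castRingHom (ZMod 2))) with hreddef
  set h : Fin 2 → P2 := fun i => red (g i) with hhdef
  set K : ZMod 2 := (Int.castRingHom (ZMod 2)) c with hKdef
  have h2P2 : (2 : P2) = 0 := by
    rw [show (2 : P2) = C 2 from (map_ofNat C 2).symm, show (2 : ZMod 2) = 0 by decide,
      map_zero]
  have hmod : (h 0) ^ (n + 1 - r) * (h 0 + h 1) ^ r = C K * X 0 ^ (n + 1) := by
    have h6 := congrArg red hkey
    rw [haev, hQ₁def] at h6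
    simp only [hreddef, map_mul, map_pow, map_add, MvPolynomial.map_C, MvPolynomial.map_X,
      map_ofNat] at h6
    rw [h2P2, zero_mul, add_zero, ← pow_add,
      show n + 1 - s' + s' = n + 1 by omega] at h6
    exact h6.symm
  -- structure of the reduced linear forms
  have hhom2 : ∀ i, (h i).IsHomogeneous 1 := fun i => homog_map (hg i)
  set a : Fin 2 → ZMod 2 := fun i => coeff (Finsupp.single 0 1) (h i) with hadef
  set b : Fin 2 → ZMod 2 := fun i => coeff (Finsupp.single 1 1) (h i) with hbdef
  have hstruct : ∀ i, h i = C (a i) * X 0 + C (b i) * X 1 := fun i =>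
    homog_one_struct (h i) (hhom2 i)
  -- reachability mod 2
  set IC : ℤ →+* P2 := red.comp (algebraMap ℤ (MvPolynomial (Fin 2) ℤ)) with hICdef
  have hreach : ∀ j : Fin 2, ∃ q : MvPolynomial (Fin 2) ℤ, eval₂ IC h q = X j := by
    intro j
    obtain ⟨q, hq'⟩ := hsurj (X j)
    refine ⟨q, ?_⟩
    have h7 := map_aeval g red q
    rw [hq'] at h7
    rw [show eval₂ IC h q = eval₂Hom IC h q from rfl, ← h7, hreddef, MvPolynomial.map_X]
  -- case analysis on K
  have hpne : n + 1 - r ≠ 0 := by omega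
  have hrne : r ≠ 0 := by omega
  rcases (show ∀ x : ZMod 2, x = 0 ∨ x = 1 by decide) K with hK | hK
  · -- K = 0 : one of the two linear factors vanishes mod 2
    rw [hK, map_zero, zero_mul] at hmod
    rcases mul_eq_zero.mp hmod with h8 | h8
    · -- h 0 = 0
      have h9 : h 0 = 0 := pow_eq_zero_iff hpne |>.mp h8
      obtain ⟨ha0, hb0⟩ := lin_coeffs ((hstruct 0).symm.trans h9)
      refine no_reach IC h (a 1) (b 1)
        ⟨0, by rw [h9]; simp⟩ ⟨1, by rw [hstruct 1]; simp⟩ hreach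
    · -- h 0 + h 1 = 0
      have h9 : h 0 + h 1 = 0 := pow_eq_zero_iff hrne |>.mp h8
      have h10 : C (a 0 + a 1) * X 0 + C (b 0 + b 1) * X 1 = (0 : P2) := by
        rw [← h9, hstruct 0, hstruct 1, C_add, C_add]; ring
      obtain ⟨ha, hb⟩ := lin_coeffs h10
      have ha1 : a 1 = -(a 0) := by linear_combination ha
      have hb1 : b 1 = -(b 0) := by linear_combination hb
      refine no_reach IC h (a 0) (b 0) ⟨1, by rw [hstruct 0]; simp⟩ ⟨-1, ?_⟩ hreach
      rw [hstruct 1, ha1, hb1, map_neg, map_neg, map_neg, map_one]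
      ring
  · -- K = 1 : evaluate at points
    rw [hK, map_one, one_mul] at hmod
    rw [hstruct 0, hstruct 1] at hmod
    have e1 := congrArg (eval ![(1 : ZMod 2), 0]) hmod
    have e2 := congrArg (eval ![(1 : ZMod 2), 1]) hmod
    simp only [map_mul, map_pow, map_add, eval_C, eval_X, Matrix.cons_val_zero,
      Matrix.cons_val_one, Matrix.head_cons, mul_one, mul_zero, add_zero, one_pow] at e1 e2
    obtain ⟨ha0, haa⟩ := zmod_pow_one hpne hrne e1
    obtain ⟨hab, habab⟩ := zmod_pow_one hpne hrne e2
    have ha1 : a 1 = 0 := by linear_combination haa - ha0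
    have hb0 : b 0 = 0 := by linear_combination hab - ha0
    have hb1 : b 1 = 0 := by linear_combination habab - haa - hab + ha0
    exact no_reach IC h 1 0 ⟨1, by rw [hstruct 0, ha0, hb0]; simp⟩
      ⟨0, by rw [hstruct 1, ha1, hb1]; simp⟩ hreach
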